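/- Fix ξ ∈ ℝ with ξ ≠ 0 and H ≥ 0. Let a, b : [H,∞) → ℂ be differentiable functions satisfying a'(z) + i z ξ a(z) = ξ⁴ b(z) and b'(z) + i z ξ b(z) = ξ² a(z) for all z ≥ H. If ∫_H^∞ |a(z) + |ξ| b(z)|² dz < ∞, then a(z) + |ξ| b(z) = 0 for all z ≥ H. -/

import Mathlib

open Set MeasureTheory

/-- **Transparent boundary condition for the Fourier modes.**
Fix `ξ ≠ 0` and `H ≥ 0`.  If `a, b : [H,∞) → ℂ` are differentiable with
`a' + izξ a = ξ⁴ b` and `b' + izξ b = ξ² a`, and if the combination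
`w₊ = a + |ξ| b` is square-integrable on `(H,∞)`, then `a + |ξ| b ≡ 0` on `[H,∞)`. -/
theorem stmt15 (ξ : ℝ) (hξ : ξ ≠ 0) (H : ℝ) (hH : 0 ≤ H) (a b : ℝ → ℂ)
    (ha : ∀ z ∈ Ici H,
      HasDerivWithinAt a ((ξ : ℂ) ^ 4 * b z - Complex.I * z * ξ * a z) (Ici H) z)
    (hb : ∀ z ∈ Ici H,
      HasDerivWithinAt b ((ξ : ℂ) ^ 2 * a z - Complex.I * z * ξ * b z) (Ici H) z)
    (hint : IntegrableOn (fun z : ℝ => ‖a z + ((|ξ| : ℝ) : ℂ) * b z‖ ^ 2) (Ioi H)) :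
    ∀ z ∈ Ici H, a z + ((|ξ| : ℝ) : ℂ) * b z = 0 := by
  set w : ℝ → ℂ := fun z => a z + ((|ξ| : ℝ) : ℂ) * b z with hwdef
  set c : ℝ := ξ ^ 2 * |ξ| with hcdef
  have hcpos : 0 < c := by positivity
  have habs : (((|ξ| : ℝ) : ℂ)) ^ 2 = (ξ : ℂ) ^ 2 := by
    rw [← Complex.ofReal_pow, ← Complex.ofReal_pow, sq_abs]
  -- w satisfies w' = (c - i z ξ) w
  have hw : ∀ z ∈ Ici H,
      HasDerivWithinAt w (((c : ℂ) - Complex.I * z * ξ) * w z) (Ici H) z := by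
    intro z hz
    have := (ha z hz).add (((hb z hz)).const_mul (((|ξ| : ℝ) : ℂ)))
    convert this using 1
    any_goals rfl
    simp only [hwdef, hcdef]
    push_cast
    linear_combination ((ξ : ℂ) ^ 2 * b z) * habs
  -- the auxiliary function u = exp(e) * w with e(z) = I ξ z²/2 - c z is constant
  set e : ℝ → ℂ := fun z => Complex.I * ξ * (z : ℂ) ^ 2 / 2 - (c : ℂ) * z with hedef
  have he : ∀ z : ℝ, HasDerivAt e (Complex.I * ξ * z - c) z := by
    intro z
    have hE : HasDerivAt (fun y : ℂ => Complex.I * ξ * y ^ 2 / 2 - (c : ℂ) * y)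
        (Complex.I * ξ * z - c) (z : ℂ) := by
      have h1 := ((hasDerivAt_pow 2 (z : ℂ)).const_mul (Complex.I * (ξ : ℂ))).div_const 2
      have h2 := (hasDerivAt_id (z : ℂ)).const_mul (c : ℂ)
      convert h1.sub h2 using 1
      any_goals rfl
      push_cast; ring
    exact hE.comp_ofReal
  set u : ℝ → ℂ := fun z => Complex.exp (e z) * w z with hudef
  have hu : ∀ z ∈ Ici H, HasDerivWithinAt u 0 (Ici H) z := by
    intro z hz
    have := ((he z).hasDerivWithinAt.cexp).mul (hw z hz)
    convert this using 1
    any_goals rfl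
    ring
  have hconst : ∀ z ∈ Ici H, u z = u H := by
    intro z hz
    have hcont : ContinuousOn u (Icc H z) := fun x hx =>
      ((hu x hx.1).continuousWithinAt).mono Icc_subset_Ici_self
    have := constant_of_has_deriv_right_zero hcont
      (fun x hx => (hu x (mem_Ici.mpr hx.1)).mono (Ici_subset_Ici.mpr hx.1))
    exact this z (mem_Icc.mpr ⟨hz, le_rfl⟩)
  -- norm identity: ‖w z‖ = ‖w H‖ * exp (c (z - H))
  have hnorm : ∀ z ∈ Ici H, ‖w z‖ = ‖w H‖ * Real.exp (c * (z - H)) := by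
    intro z hz
    have h1 : Complex.exp (e z) * w z = Complex.exp (e H) * w H := hconst z hz
    have h2 : w z = Complex.exp (e H - e z) * w H := by
      rw [Complex.exp_sub, div_mul_eq_mul_div, eq_div_iff (Complex.exp_ne_zero _)]
      linear_combination h1
    rw [h2, norm_mul, Complex.norm_exp]
    have hre : (e H - e z).re = c * (z - H) := by
      simp [hedef, Complex.sub_re, Complex.div_re, Complex.mul_re, Complex.mul_im,
        ← Complex.ofReal_pow]
      ring
    rw [hre]; ring
  -- if w H ≠ 0 we contradict integrability
  have hwH : w H = 0 := by
    by_contra hne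
    have hne' : ‖w H‖ ≠ 0 := norm_ne_zero_iff.mpr hne
    have hpos : (0 : ℝ) < ‖w H‖ ^ 2 := by positivity
    have hmono : IntegrableOn (fun _ : ℝ => ‖w H‖ ^ 2) (Ioi H) := by
      refine Integrable.mono hint aestronglyMeasurable_const ?_
      refine (ae_restrict_iff' measurableSet_Ioi).mpr (ae_of_all _ fun z hz => ?_)
      have hz' : z ∈ Ici H := mem_Ici.mpr (le_of_lt hz)
      have h1 : ‖w H‖ ≤ ‖w z‖ := by
        rw [hnorm z hz']
        nlinarith [Real.one_le_exp (by nlinarith [mem_Ioi.mp hz] : 0 ≤ c * (z - H)),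
          norm_nonneg (w H)]
      have h2 : ‖w H‖ ^ 2 ≤ ‖w z‖ ^ 2 := by
        nlinarith [norm_nonneg (w H), norm_nonneg (w z)]
      calc ‖‖w H‖ ^ 2‖ = ‖w H‖ ^ 2 := by
            rw [Real.norm_eq_abs, abs_of_nonneg (by positivity)]
        _ ≤ ‖w z‖ ^ 2 := h2
        _ ≤ ‖‖w z‖ ^ 2‖ := le_abs_self _
    rw [integrableOn_const_iff] at hmono
    rcases hmono with h | h
    · exact absurd (enorm_eq_zero.mp h) (ne_of_gt hpos)
    · simp [Real.volume_Ioi] at h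
  intro z hz
  have h1 : u z = u H := hconst z hz
  simp only [hudef, hwH, mul_zero] at h1
  have := mul_eq_zero.mp h1
  rcases this with h | h
  · exact absurd h (Complex.exp_ne_zero _)
  · exact h
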